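/- arXiv:2003.05451 — 3 statements merged into one kernel-verified Lean document; each statement's English description precedes it below -/
import Mathlib

section
/- Let ρ be a density operator on ℂ^{d_O} ⊗ ℂ^{d_B}, and let σ_O, σ_B be density operators on ℂ^{d_O} and ℂ^{d_B} respectively. Let ρ_O and ρ_B denote the partial traces of ρ over the second and first tensor factors respectively. Then ‖ρ − ρ_O ⊗ ρ_B‖₁ ≤ 3·‖ρ − σ_O ⊗ σ_B‖₁. -/
open Matrix
open scoped Kronecker ComplexOrder

/-- The positive semidefinite square root of a positive semidefinite matrix
(the definition of `Matrix.PosSemidef.sqrt` in the older Mathlib). -/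
noncomputable def posSemidefSqrt {n : Type*} [Fintype n] [DecidableEq n] {A : Matrix n n ℂ}
    (hA : A.PosSemidef) : Matrix n n ℂ :=
  hA.1.eigenvectorUnitary.1 * diagonal ((↑) ∘ (√·) ∘ hA.1.eigenvalues) *
  (star hA.1.eigenvectorUnitary : Matrix n n ℂ)

/-- The trace norm `‖A‖₁ = Tr √(AᴴA)` of a complex square matrix. -/
noncomputable def traceNorm {n : Type*} [Fintype n] [DecidableEq n] (A : Matrix n n ℂ) : ℝ :=
  (posSemidefSqrt (Matrix.posSemidef_conjTranspose_mul_self A)).trace.re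

/-- A density operator: positive semidefinite with unit trace. -/
def IsDensity {n : Type*} [Fintype n] (ρ : Matrix n n ℂ) : Prop :=
  ρ.PosSemidef ∧ ρ.trace = 1

/-- Partial trace over the second tensor factor. -/
noncomputable def ptraceSnd {a b : Type*} [Fintype b] (ρ : Matrix (a × b) (a × b) ℂ) :
    Matrix a a ℂ :=
  Matrix.of fun i i' => ∑ x, ρ (i, x) (i', x)

/-- Partial trace over the first tensor factor. -/
noncomputable def ptraceFst {a b : Type*} [Fintype a] (ρ : Matrix (a × b) (a × b) ℂ) :
    Matrix b b ℂ :=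
  Matrix.of fun j j' => ∑ x, ρ (x, j) (x, j')

set_option linter.unusedSectionVars false

section SqrtAux

open scoped MatrixOrder

private lemma posSemidefSqrt_eq_cfc {n : Type*} [Fintype n] [DecidableEq n] {A : Matrix n n ℂ}
    (hA : A.PosSemidef) : posSemidefSqrt hA = CFC.sqrt A := by
  rw [CFC.sqrt_eq_real_sqrt A hA.nonneg, cfcₙ_eq_cfc, hA.1.cfc_eq]
  simp [IsHermitian.cfc, posSemidefSqrt, Unitary.conjStarAlgAut_apply, Function.comp_def]

private lemma posSemidefSqrt_posSemidef {n : Type*} [Fintype n] [DecidableEq n]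
    {A : Matrix n n ℂ} (hA : A.PosSemidef) : (posSemidefSqrt hA).PosSemidef := by
  rw [posSemidefSqrt_eq_cfc]
  exact (CFC.sqrt_nonneg A).posSemidef

private lemma posSemidefSqrt_sq {n : Type*} [Fintype n] [DecidableEq n]
    {A : Matrix n n ℂ} (hA : A.PosSemidef) : posSemidefSqrt hA ^ 2 = A := by
  rw [posSemidefSqrt_eq_cfc]
  exact CFC.sq_sqrt A hA.nonneg

private lemma eq_posSemidefSqrt_of_sq_eq {n : Type*} [Fintype n] [DecidableEq n]
    {A B : Matrix n n ℂ} (hB : B.PosSemidef) (hA : A.PosSemidef) (h : B ^ 2 = A) :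
    B = posSemidefSqrt hA := by
  rw [posSemidefSqrt_eq_cfc, eq_comm, CFC.sqrt_eq_iff A B hA.nonneg hB.nonneg, ← sq, h]

end SqrtAux

section HermAux

variable {n : Type*} [Fintype n] [DecidableEq n]

private lemma unitary_conj_diag_posSemidef (U : Matrix.unitaryGroup n ℂ) {d : n → ℝ}
    (hd : ∀ i, 0 ≤ d i) :
    Matrix.PosSemidef ((U : Matrix n n ℂ) * Matrix.diagonal (fun i => ((d i : ℝ) : ℂ)) *
      (U : Matrix n n ℂ)ᴴ) := by
  apply Matrix.PosSemidef.mul_mul_conjTranspose_same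
  exact Matrix.posSemidef_diagonal_iff.mpr fun i => Complex.zero_le_real.mpr (hd i)

private lemma conjTranspose_mul_unitary (U : Matrix.unitaryGroup n ℂ) :
    (U : Matrix n n ℂ)ᴴ * (U : Matrix n n ℂ) = 1 := by
  simpa [Matrix.star_eq_conjTranspose] using Matrix.mem_unitaryGroup_iff'.mp U.2

private lemma unitary_mul_conjTranspose (U : Matrix.unitaryGroup n ℂ) :
    (U : Matrix n n ℂ) * (U : Matrix n n ℂ)ᴴ = 1 := by
  simpa [Matrix.star_eq_conjTranspose] using Matrix.mem_unitaryGroup_iff.mp U.2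

private lemma herm_sqrt_eq {A : Matrix n n ℂ} (hA : A.IsHermitian) :
    posSemidefSqrt (Matrix.posSemidef_conjTranspose_mul_self A) =
      (hA.eigenvectorUnitary : Matrix n n ℂ) *
        Matrix.diagonal (fun i => ((|hA.eigenvalues i| : ℝ) : ℂ)) *
        (hA.eigenvectorUnitary : Matrix n n ℂ)ᴴ := by
  symm
  apply eq_posSemidefSqrt_of_sq_eq
    (unitary_conj_diag_posSemidef _ fun i => abs_nonneg _)
  set U := (hA.eigenvectorUnitary : Matrix n n ℂ)
  have hU : Uᴴ * U = 1 := conjTranspose_mul_unitary _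
  have hspec : A = U * Matrix.diagonal (RCLike.ofReal ∘ hA.eigenvalues) * Uᴴ := by
    simpa [Matrix.star_eq_conjTranspose] using hA.spectral_theorem
  have hAA : Aᴴ * A = U * Matrix.diagonal (fun i => ((hA.eigenvalues i : ℝ) : ℂ)^2) * Uᴴ := by
    conv_lhs => rw [hA.eq, hspec]
    simp only [Matrix.mul_assoc]
    rw [← Matrix.mul_assoc Uᴴ U, hU, Matrix.one_mul,
      ← Matrix.mul_assoc (Matrix.diagonal _) (Matrix.diagonal _), Matrix.diagonal_mul_diagonal]
    congr 2
    ext i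
    simp [sq]
  rw [hAA, pow_two]
  simp only [Matrix.mul_assoc]
  rw [← Matrix.mul_assoc Uᴴ U, hU, Matrix.one_mul,
    ← Matrix.mul_assoc (Matrix.diagonal _) (Matrix.diagonal _), Matrix.diagonal_mul_diagonal]
  have hdi : (fun i => ((|hA.eigenvalues i| : ℝ) : ℂ) * ((|hA.eigenvalues i| : ℝ) : ℂ)) =
      fun i => ((hA.eigenvalues i : ℝ) : ℂ) ^ 2 := by
    funext i
    rw [← Complex.ofReal_mul, abs_mul_abs_self, Complex.ofReal_mul, ← sq]
  rw [hdi]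

private lemma trace_unitary_conj_diag (U : Matrix.unitaryGroup n ℂ) (d : n → ℂ) :
    ((U : Matrix n n ℂ) * Matrix.diagonal d * (U : Matrix n n ℂ)ᴴ).trace = ∑ i, d i := by
  rw [Matrix.trace_mul_cycle, conjTranspose_mul_unitary, Matrix.one_mul, Matrix.trace_diagonal]

private lemma traceNorm_of_isHermitian {A : Matrix n n ℂ} (hA : A.IsHermitian) :
    traceNorm A = ∑ i, |hA.eigenvalues i| := by
  unfold traceNorm
  rw [herm_sqrt_eq hA, trace_unitary_conj_diag]
  simp

private lemma trace_eq_sum_eigenvalues {A : Matrix n n ℂ} (hA : A.IsHermitian) :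
    A.trace = ∑ i, (hA.eigenvalues i : ℂ) := by
  have hspec : A = (hA.eigenvectorUnitary : Matrix n n ℂ) *
      Matrix.diagonal (RCLike.ofReal ∘ hA.eigenvalues) *
      (hA.eigenvectorUnitary : Matrix n n ℂ)ᴴ := by
    simpa [Matrix.star_eq_conjTranspose] using hA.spectral_theorem
  conv_lhs => rw [hspec]
  rw [trace_unitary_conj_diag]
  rfl

private lemma traceNorm_of_posSemidef {A : Matrix n n ℂ} (hA : A.PosSemidef) :
    traceNorm A = A.trace.re := by
  rw [traceNorm_of_isHermitian hA.1, trace_eq_sum_eigenvalues hA.1]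
  simp only [Complex.re_sum, Complex.ofReal_re]
  exact Finset.sum_congr rfl fun i _ => abs_of_nonneg (hA.eigenvalues_nonneg i)

private lemma trace_formula (U V : Matrix n n ℂ) (s e : n → ℂ) :
    (U * Matrix.diagonal s * Uᴴ * (V * Matrix.diagonal e * Vᴴ)).trace
      = ∑ j, ∑ i, (Uᴴ * V) j i * e i * (starRingEnd ℂ) ((Uᴴ * V) j i) * s j := by
  rw [Matrix.mul_assoc (U * Matrix.diagonal s) Uᴴ _, Matrix.trace_mul_comm,
    ← Matrix.mul_assoc _ U (Matrix.diagonal s)]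
  have hM : Uᴴ * (V * Matrix.diagonal e * Vᴴ) * U
      = (Uᴴ * V) * Matrix.diagonal e * (Uᴴ * V)ᴴ := by
    rw [Matrix.conjTranspose_mul, Matrix.conjTranspose_conjTranspose]
    simp [Matrix.mul_assoc]
  rw [hM]
  have hdiag : ∀ j, ((Uᴴ * V) * Matrix.diagonal e * (Uᴴ * V)ᴴ * Matrix.diagonal s) j j
      = ∑ i, (Uᴴ * V) j i * e i * (starRingEnd ℂ) ((Uᴴ * V) j i) * s j := by
    intro j
    rw [Matrix.mul_diagonal, Matrix.mul_apply, Finset.sum_mul]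
    refine Finset.sum_congr rfl fun i _ => ?_
    simp only [Matrix.mul_diagonal, Matrix.conjTranspose_apply, RCLike.star_def]
  rw [Matrix.trace]
  exact Finset.sum_congr rfl fun j _ => hdiag j

private lemma dual_bound {Y : Matrix n n ℂ} (hY : Y.IsHermitian) (U : Matrix.unitaryGroup n ℂ)
    (s : n → ℝ) (hs : ∀ j, |s j| ≤ 1) :
    (((U : Matrix n n ℂ) * Matrix.diagonal (fun j => ((s j : ℝ) : ℂ)) *
      (U : Matrix n n ℂ)ᴴ * Y).trace).re ≤ traceNorm Y := by
  set V := (hY.eigenvectorUnitary : Matrix n n ℂ) with hV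
  set e := hY.eigenvalues with he
  set W := (U : Matrix n n ℂ)ᴴ * V with hW
  have hspec : Y = V * Matrix.diagonal (fun i => ((e i : ℝ) : ℂ)) * Vᴴ := by
    simpa [Matrix.star_eq_conjTranspose, Function.comp_def] using hY.spectral_theorem
  have hWu : Wᴴ * W = 1 := by
    rw [hW, Matrix.conjTranspose_mul, Matrix.conjTranspose_conjTranspose, Matrix.mul_assoc,
      ← Matrix.mul_assoc (U : Matrix n n ℂ), unitary_mul_conjTranspose, Matrix.one_mul]
    exact conjTranspose_mul_unitary hY.eigenvectorUnitary
  have hsum : ∀ i, ∑ j, Complex.normSq (W j i) = 1 := by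
    intro i
    have h1 : (Wᴴ * W) i i = 1 := by rw [hWu]; simp
    have h2 : ∑ j, ((Complex.normSq (W j i) : ℝ) : ℂ) = 1 := by
      rw [← h1, Matrix.mul_apply]
      congr 1
      funext j
      rw [Matrix.conjTranspose_apply, Complex.normSq_eq_conj_mul_self, RCLike.star_def]
    exact_mod_cast h2
  conv_lhs => rw [hspec, trace_formula, ← hW]
  rw [traceNorm_of_isHermitian hY]
  have hterm : ∀ j i, W j i * ((e i : ℝ) : ℂ) * (starRingEnd ℂ) (W j i) * ((s j : ℝ) : ℂ)
      = ((e i * Complex.normSq (W j i) * s j : ℝ) : ℂ) := by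
    intro j i
    rw [show W j i * ((e i : ℝ) : ℂ) * (starRingEnd ℂ) (W j i) * ((s j : ℝ) : ℂ)
        = ((e i : ℝ) : ℂ) * (W j i * (starRingEnd ℂ) (W j i)) * ((s j : ℝ) : ℂ) from by ring,
      Complex.mul_conj]
    push_cast
    ring
  simp only [hterm, ← Complex.ofReal_sum, Complex.ofReal_re]
  calc ∑ j, ∑ i, e i * Complex.normSq (W j i) * s j
      ≤ ∑ j, ∑ i, |e i| * Complex.normSq (W j i) := by
        refine Finset.sum_le_sum fun j _ => Finset.sum_le_sum fun i _ => ?_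
        have h0 : (0:ℝ) ≤ Complex.normSq (W j i) := Complex.normSq_nonneg _
        calc e i * Complex.normSq (W j i) * s j
            ≤ |e i * Complex.normSq (W j i) * s j| := le_abs_self _
          _ = |e i| * Complex.normSq (W j i) * |s j| := by
              rw [abs_mul, abs_mul, abs_of_nonneg h0]
          _ ≤ |e i| * Complex.normSq (W j i) * 1 :=
              mul_le_mul_of_nonneg_left (hs j) (by positivity)
          _ = |e i| * Complex.normSq (W j i) := mul_one _
    _ = ∑ i, |e i| := by
        rw [Finset.sum_comm]
        refine Finset.sum_congr rfl fun i _ => ?_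
        rw [← Finset.mul_sum, hsum i, mul_one]

/-- Triangle inequality for the trace norm of Hermitian matrices. -/
private lemma traceNorm_add_le {X Y : Matrix n n ℂ} (hX : X.IsHermitian) (hY : Y.IsHermitian) :
    traceNorm (X + Y) ≤ traceNorm X + traceNorm Y := by
  have hZ : (X + Y).IsHermitian := hX.add hY
  set U := hZ.eigenvectorUnitary with hU
  set d := hZ.eigenvalues with hd
  set s : n → ℝ := fun i => if 0 ≤ d i then 1 else -1 with hsdef
  have hs : ∀ j, |s j| ≤ 1 := by
    intro j; by_cases h : 0 ≤ d j <;> simp [hsdef, h]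
  set C := (U : Matrix n n ℂ) * Matrix.diagonal (fun j => ((s j : ℝ) : ℂ)) *
    (U : Matrix n n ℂ)ᴴ with hC
  have hspec : X + Y = (U : Matrix n n ℂ) * Matrix.diagonal (fun i => ((d i : ℝ) : ℂ)) *
      (U : Matrix n n ℂ)ᴴ := by
    simpa [Matrix.star_eq_conjTranspose, Function.comp_def] using hZ.spectral_theorem
  have hmain : ((C * (X + Y)).trace).re = traceNorm (X + Y) := by
    have hcz : C * (X + Y) = (U : Matrix n n ℂ) *
        Matrix.diagonal (fun i => ((s i : ℝ) : ℂ) * ((d i : ℝ) : ℂ)) *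
        (U : Matrix n n ℂ)ᴴ := by
      conv_lhs => rw [hC, hspec]
      simp only [Matrix.mul_assoc]
      rw [← Matrix.mul_assoc (U : Matrix n n ℂ)ᴴ (U : Matrix n n ℂ),
        conjTranspose_mul_unitary, Matrix.one_mul,
        ← Matrix.mul_assoc (Matrix.diagonal _) (Matrix.diagonal _),
        Matrix.diagonal_mul_diagonal]
    rw [hcz, trace_unitary_conj_diag, traceNorm_of_isHermitian hZ]
    have habs : ∀ i, ((s i : ℝ) : ℂ) * ((d i : ℝ) : ℂ) = ((|d i| : ℝ) : ℂ) := by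
      intro i
      by_cases h : 0 ≤ d i
      · simp [hsdef, h, abs_of_nonneg h]
      · simp [hsdef, h, abs_of_neg (lt_of_not_ge h)]
    simp only [habs, ← Complex.ofReal_sum, Complex.ofReal_re, ← hd]
  have h1 : ((C * X).trace).re ≤ traceNorm X := by rw [hC]; exact dual_bound hX U s hs
  have h2 : ((C * Y).trace).re ≤ traceNorm Y := by rw [hC]; exact dual_bound hY U s hs
  have hadd : ((C * (X + Y)).trace).re = ((C * X).trace).re + ((C * Y).trace).re := by
    rw [Matrix.mul_add, Matrix.trace_add, Complex.add_re]
  rw [← hmain, hadd]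
  exact add_le_add h1 h2

private lemma traceNorm_congr {A B : Matrix n n ℂ} (h : Aᴴ * A = Bᴴ * B) :
    traceNorm A = traceNorm B := by
  have key : posSemidefSqrt (Matrix.posSemidef_conjTranspose_mul_self A)
      = posSemidefSqrt (Matrix.posSemidef_conjTranspose_mul_self B) :=
    eq_posSemidefSqrt_of_sq_eq
      (posSemidefSqrt_posSemidef (Matrix.posSemidef_conjTranspose_mul_self A))
      (Matrix.posSemidef_conjTranspose_mul_self B)
      (by rw [posSemidefSqrt_sq, h])
  unfold traceNorm
  rw [key]

private lemma traceNorm_neg (A : Matrix n n ℂ) : traceNorm (-A) = traceNorm A :=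
  traceNorm_congr (by simp)

private lemma traceNorm_sub_comm (A B : Matrix n n ℂ) :
    traceNorm (A - B) = traceNorm (B - A) := by
  rw [show B - A = -(A - B) from (neg_sub A B).symm, traceNorm_neg]

/-- Jordan decomposition of a Hermitian matrix realizing the trace norm. -/
private lemma jordan {X : Matrix n n ℂ} (hX : X.IsHermitian) :
    ∃ P N : Matrix n n ℂ, P.PosSemidef ∧ N.PosSemidef ∧ X = P - N ∧
      P.trace.re + N.trace.re = traceNorm X := by
  set U := hX.eigenvectorUnitary with hU
  set d := hX.eigenvalues with hd
  refine ⟨(U : Matrix n n ℂ) * Matrix.diagonal (fun i => ((max (d i) 0 : ℝ) : ℂ)) *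
      (U : Matrix n n ℂ)ᴴ,
    (U : Matrix n n ℂ) * Matrix.diagonal (fun i => ((max (-(d i)) 0 : ℝ) : ℂ)) *
      (U : Matrix n n ℂ)ᴴ,
    unitary_conj_diag_posSemidef U (fun i => le_max_right _ _),
    unitary_conj_diag_posSemidef U (fun i => le_max_right _ _), ?_, ?_⟩
  · have hspec : X = (U : Matrix n n ℂ) * Matrix.diagonal (fun i => ((d i : ℝ) : ℂ)) *
        (U : Matrix n n ℂ)ᴴ := by
      simpa [Matrix.star_eq_conjTranspose, Function.comp_def] using hX.spectral_theorem
    rw [hspec, ← Matrix.sub_mul, ← Matrix.mul_sub]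
    congr 2
    ext i j
    simp only [Matrix.sub_apply, Matrix.diagonal_apply]
    split
    · rw [← Complex.ofReal_sub]
      congr 1
      rcases le_total (d i) 0 with h | h
      · rw [max_eq_right h, max_eq_left (by linarith)]; ring
      · rw [max_eq_left h, max_eq_right (by linarith)]; ring
    · simp
  · rw [trace_unitary_conj_diag, trace_unitary_conj_diag, traceNorm_of_isHermitian hX,
      ← Complex.ofReal_sum, ← Complex.ofReal_sum, Complex.ofReal_re, Complex.ofReal_re,
      ← Finset.sum_add_distrib]
    refine Finset.sum_congr rfl fun i _ => ?_
    rcases le_total (d i) 0 with h | h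
    · rw [max_eq_right h, max_eq_left (by linarith), abs_of_nonpos h]; ring
    · rw [max_eq_left h, max_eq_right (by linarith), abs_of_nonneg h]; ring

private lemma traceNorm_sub_le_traces {P N : Matrix n n ℂ} (hP : P.PosSemidef)
    (hN : N.PosSemidef) :
    traceNorm (P - N) ≤ P.trace.re + N.trace.re := by
  have h := traceNorm_add_le hP.1 hN.1.neg
  rw [traceNorm_neg, traceNorm_of_posSemidef hP, traceNorm_of_posSemidef hN] at h
  rw [sub_eq_add_neg]
  exact h

end HermAux

section PtraceAux

variable {a b : Type*} [Fintype a] [Fintype b] [DecidableEq a] [DecidableEq b]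

private lemma ptraceSnd_sub (ρ σ : Matrix (a × b) (a × b) ℂ) :
    ptraceSnd (ρ - σ) = ptraceSnd ρ - ptraceSnd σ := by
  ext i i'
  simp [ptraceSnd, Finset.sum_sub_distrib]

private lemma ptraceFst_sub (ρ σ : Matrix (a × b) (a × b) ℂ) :
    ptraceFst (ρ - σ) = ptraceFst ρ - ptraceFst σ := by
  ext i i'
  simp [ptraceFst, Finset.sum_sub_distrib]

private lemma ptraceSnd_trace (ρ : Matrix (a × b) (a × b) ℂ) :
    (ptraceSnd ρ).trace = ρ.trace := by
  simp [ptraceSnd, Matrix.trace, Fintype.sum_prod_type, Matrix.diag]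

private lemma ptraceFst_trace (ρ : Matrix (a × b) (a × b) ℂ) :
    (ptraceFst ρ).trace = ρ.trace := by
  rw [Matrix.trace, Matrix.trace, Fintype.sum_prod_type]
  rw [Finset.sum_comm]
  rfl

private lemma ptraceSnd_posSemidef {ρ : Matrix (a × b) (a × b) ℂ} (hρ : ρ.PosSemidef) :
    (ptraceSnd ρ).PosSemidef := by
  refine Matrix.posSemidef_iff_dotProduct_mulVec.mpr ⟨?_, ?_⟩
  · ext i i'
    simp only [Matrix.conjTranspose_apply, ptraceSnd, Matrix.of_apply, star_sum]
    refine Finset.sum_congr rfl fun s _ => ?_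
    exact congrFun (congrFun hρ.1 (i, s)) (i', s)
  · intro x
    have hrhs : ∀ c : b, star (fun p : a × b => if p.2 = c then x p.1 else 0) ⬝ᵥ
        (ρ *ᵥ fun p : a × b => if p.2 = c then x p.1 else 0)
        = ∑ i, ∑ i', star (x i) * ρ (i, c) (i', c) * x i' := by
      intro c
      simp only [dotProduct, Matrix.mulVec, Pi.star_apply, Fintype.sum_prod_type,
        apply_ite star, star_zero, ite_mul, zero_mul, mul_ite, mul_zero]
      simp only [Finset.sum_ite_eq', Finset.mem_univ, if_true]
      refine Finset.sum_congr rfl fun i _ => ?_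
      rw [Finset.mul_sum]
      exact Finset.sum_congr rfl fun i' _ => (mul_assoc _ _ _).symm
    have key : star x ⬝ᵥ ((ptraceSnd ρ) *ᵥ x)
        = ∑ c : b, star (fun p : a × b => if p.2 = c then x p.1 else 0) ⬝ᵥ
            (ρ *ᵥ fun p : a × b => if p.2 = c then x p.1 else 0) := by
      rw [Finset.sum_congr rfl fun c _ => hrhs c]
      have l1 : star x ⬝ᵥ ((ptraceSnd ρ) *ᵥ x)
          = ∑ i, ∑ i', ∑ c, star (x i) * ρ (i, c) (i', c) * x i' := by
        simp only [dotProduct, Matrix.mulVec, ptraceSnd, Matrix.of_apply, Pi.star_apply,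
          Finset.mul_sum, Finset.sum_mul, mul_assoc]
      rw [l1]
      rw [Finset.sum_congr rfl fun i (_ : i ∈ Finset.univ) =>
        (Finset.sum_comm : ∑ i' : a, ∑ c : b, star (x i) * ρ (i, c) (i', c) * x i' = _)]
      exact Finset.sum_comm
    rw [key]
    exact Finset.sum_nonneg fun c _ => hρ.dotProduct_mulVec_nonneg _

private lemma ptraceFst_posSemidef {ρ : Matrix (a × b) (a × b) ℂ} (hρ : ρ.PosSemidef) :
    (ptraceFst ρ).PosSemidef := by
  refine Matrix.posSemidef_iff_dotProduct_mulVec.mpr ⟨?_, ?_⟩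
  · ext j j'
    simp only [Matrix.conjTranspose_apply, ptraceFst, Matrix.of_apply, star_sum]
    refine Finset.sum_congr rfl fun s _ => ?_
    exact congrFun (congrFun hρ.1 (s, j)) (s, j')
  · intro x
    have hrhs : ∀ c : a, star (fun p : a × b => if p.1 = c then x p.2 else 0) ⬝ᵥ
        (ρ *ᵥ fun p : a × b => if p.1 = c then x p.2 else 0)
        = ∑ j, ∑ j', star (x j) * ρ (c, j) (c, j') * x j' := by
      intro c
      simp only [dotProduct, Matrix.mulVec, Pi.star_apply, Fintype.sum_prod_type,
        apply_ite star, star_zero, ite_mul, zero_mul, mul_ite, mul_zero,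
        Finset.sum_ite_irrel, Finset.sum_const_zero, Finset.sum_ite_eq',
        Finset.mem_univ, if_true]
      refine Finset.sum_congr rfl fun j _ => ?_
      rw [Finset.mul_sum]
      exact Finset.sum_congr rfl fun j' _ => (mul_assoc _ _ _).symm
    have key : star x ⬝ᵥ ((ptraceFst ρ) *ᵥ x)
        = ∑ c : a, star (fun p : a × b => if p.1 = c then x p.2 else 0) ⬝ᵥ
            (ρ *ᵥ fun p : a × b => if p.1 = c then x p.2 else 0) := by
      rw [Finset.sum_congr rfl fun c _ => hrhs c]
      have l1 : star x ⬝ᵥ ((ptraceFst ρ) *ᵥ x)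
          = ∑ j, ∑ j', ∑ c, star (x j) * ρ (c, j) (c, j') * x j' := by
        simp only [dotProduct, Matrix.mulVec, ptraceFst, Matrix.of_apply, Pi.star_apply,
          Finset.mul_sum, Finset.sum_mul, mul_assoc]
      rw [l1]
      rw [Finset.sum_congr rfl fun j (_ : j ∈ Finset.univ) =>
        (Finset.sum_comm : ∑ j' : b, ∑ c : a, star (x j) * ρ (c, j) (c, j') * x j' = _)]
      exact Finset.sum_comm
    rw [key]
    exact Finset.sum_nonneg fun c _ => hρ.dotProduct_mulVec_nonneg _

private lemma conjTranspose_kronecker (A : Matrix a a ℂ) (B : Matrix b b ℂ) :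
    (A ⊗ₖ B)ᴴ = Aᴴ ⊗ₖ Bᴴ := by
  ext ⟨i, j⟩ ⟨i', j'⟩
  simp [Matrix.conjTranspose_apply, Matrix.kroneckerMap_apply]

private lemma kronecker_posSemidef {A : Matrix a a ℂ} {B : Matrix b b ℂ}
    (hA : A.PosSemidef) (hB : B.PosSemidef) : (A ⊗ₖ B).PosSemidef := by
  exact hA.kronecker hB

private lemma kronecker_isHermitian {A : Matrix a a ℂ} {B : Matrix b b ℂ}
    (hA : A.IsHermitian) (hB : B.IsHermitian) : (A ⊗ₖ B).IsHermitian := by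
  rw [Matrix.IsHermitian, Matrix.conjTranspose_kronecker, hA.eq, hB.eq]

private lemma ptraceSnd_kronecker (A : Matrix a a ℂ) (B : Matrix b b ℂ) :
    ptraceSnd (A ⊗ₖ B) = B.trace • A := by
  ext i i'
  simp only [ptraceSnd, Matrix.of_apply, Matrix.kroneckerMap_apply, Matrix.smul_apply,
    Matrix.trace, Matrix.diag_apply, smul_eq_mul]
  rw [Finset.sum_mul]
  exact Finset.sum_congr rfl fun x _ => mul_comm _ _

private lemma ptraceFst_kronecker (A : Matrix a a ℂ) (B : Matrix b b ℂ) :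
    ptraceFst (A ⊗ₖ B) = A.trace • B := by
  ext j j'
  simp only [ptraceFst, Matrix.of_apply, Matrix.kroneckerMap_apply, Matrix.smul_apply,
    Matrix.trace, Matrix.diag_apply, smul_eq_mul]
  exact (Finset.sum_mul Finset.univ (fun x => A x x) (B j j')).symm

private lemma kronecker_sub (A : Matrix a a ℂ) (B C : Matrix b b ℂ) :
    A ⊗ₖ (B - C) = A ⊗ₖ B - A ⊗ₖ C := by
  ext ⟨i, j⟩ ⟨i', j'⟩
  simp [Matrix.kroneckerMap_apply, mul_sub]

private lemma sub_kronecker (A B : Matrix a a ℂ) (C : Matrix b b ℂ) :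
    (A - B) ⊗ₖ C = A ⊗ₖ C - B ⊗ₖ C := by
  ext ⟨i, j⟩ ⟨i', j'⟩
  simp [Matrix.kroneckerMap_apply, sub_mul]

/-- The trace distance is non-increasing under the partial trace over the second factor. -/
private lemma traceNorm_ptraceSnd_le {X : Matrix (a × b) (a × b) ℂ} (hX : X.IsHermitian) :
    traceNorm (ptraceSnd X) ≤ traceNorm X := by
  obtain ⟨P, N, hP, hN, hXPN, htr⟩ := jordan hX
  calc traceNorm (ptraceSnd X) = traceNorm (ptraceSnd P - ptraceSnd N) := by
        rw [hXPN, ptraceSnd_sub]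
    _ ≤ (ptraceSnd P).trace.re + (ptraceSnd N).trace.re :=
        traceNorm_sub_le_traces (ptraceSnd_posSemidef hP) (ptraceSnd_posSemidef hN)
    _ = P.trace.re + N.trace.re := by rw [ptraceSnd_trace, ptraceSnd_trace]
    _ = traceNorm X := htr

/-- The trace distance is non-increasing under the partial trace over the first factor. -/
private lemma traceNorm_ptraceFst_le {X : Matrix (a × b) (a × b) ℂ} (hX : X.IsHermitian) :
    traceNorm (ptraceFst X) ≤ traceNorm X := by
  obtain ⟨P, N, hP, hN, hXPN, htr⟩ := jordan hX
  calc traceNorm (ptraceFst X) = traceNorm (ptraceFst P - ptraceFst N) := by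
        rw [hXPN, ptraceFst_sub]
    _ ≤ (ptraceFst P).trace.re + (ptraceFst N).trace.re :=
        traceNorm_sub_le_traces (ptraceFst_posSemidef hP) (ptraceFst_posSemidef hN)
    _ = P.trace.re + N.trace.re := by rw [ptraceFst_trace, ptraceFst_trace]
    _ = traceNorm X := htr

private lemma traceNorm_kronecker_left {σ : Matrix a a ℂ} {A : Matrix b b ℂ}
    (hσ : σ.PosSemidef) (hσt : σ.trace = 1) (hA : A.IsHermitian) :
    traceNorm (σ ⊗ₖ A) ≤ traceNorm A := by
  obtain ⟨P, N, hP, hN, hXPN, htr⟩ := jordan hA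
  calc traceNorm (σ ⊗ₖ A) = traceNorm (σ ⊗ₖ P - σ ⊗ₖ N) := by rw [hXPN, kronecker_sub]
    _ ≤ (σ ⊗ₖ P).trace.re + (σ ⊗ₖ N).trace.re :=
        traceNorm_sub_le_traces (kronecker_posSemidef hσ hP) (kronecker_posSemidef hσ hN)
    _ = P.trace.re + N.trace.re := by
        rw [Matrix.trace_kronecker, Matrix.trace_kronecker, hσt, one_mul, one_mul]
    _ = traceNorm A := htr

private lemma traceNorm_kronecker_right {A : Matrix a a ℂ} {σ : Matrix b b ℂ}
    (hσ : σ.PosSemidef) (hσt : σ.trace = 1) (hA : A.IsHermitian) :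
    traceNorm (A ⊗ₖ σ) ≤ traceNorm A := by
  obtain ⟨P, N, hP, hN, hXPN, htr⟩ := jordan hA
  calc traceNorm (A ⊗ₖ σ) = traceNorm (P ⊗ₖ σ - N ⊗ₖ σ) := by rw [hXPN, sub_kronecker]
    _ ≤ (P ⊗ₖ σ).trace.re + (N ⊗ₖ σ).trace.re :=
        traceNorm_sub_le_traces (kronecker_posSemidef hP hσ) (kronecker_posSemidef hN hσ)
    _ = P.trace.re + N.trace.re := by
        rw [Matrix.trace_kronecker, Matrix.trace_kronecker, hσt, mul_one, mul_one]
    _ = traceNorm A := htr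

end PtraceAux

/-- If a bipartite density operator `ρ` is close in trace norm to some product state
`σ_O ⊗ σ_B`, then it is within three times that distance from the product of its own
marginals. -/
theorem close_to_product_implies_close_to_marginals
    (dO dB : ℕ) (ρ : Matrix (Fin dO × Fin dB) (Fin dO × Fin dB) ℂ)
    (σO : Matrix (Fin dO) (Fin dO) ℂ) (σB : Matrix (Fin dB) (Fin dB) ℂ)
    (hρ : IsDensity ρ) (hσO : IsDensity σO) (hσB : IsDensity σB) :
    traceNorm (ρ - (ptraceSnd ρ) ⊗ₖ (ptraceFst ρ)) ≤ 3 * traceNorm (ρ - σO ⊗ₖ σB) := by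
  obtain ⟨hρp, hρt⟩ := hρ
  obtain ⟨hσOp, hσOt⟩ := hσO
  obtain ⟨hσBp, hσBt⟩ := hσB
  have hρO : (ptraceSnd ρ).PosSemidef := ptraceSnd_posSemidef hρp
  have hρB : (ptraceFst ρ).PosSemidef := ptraceFst_posSemidef hρp
  have hρBt : (ptraceFst ρ).trace = 1 := by rw [ptraceFst_trace, hρt]
  have hXh : (ρ - σO ⊗ₖ σB).IsHermitian :=
    hρp.1.sub (kronecker_isHermitian hσOp.1 hσBp.1)
  have h1 : traceNorm (ptraceSnd ρ - σO) ≤ traceNorm (ρ - σO ⊗ₖ σB) := by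
    have e : ptraceSnd (ρ - σO ⊗ₖ σB) = ptraceSnd ρ - σO := by
      rw [ptraceSnd_sub, ptraceSnd_kronecker, hσBt, one_smul]
    rw [← e]
    exact traceNorm_ptraceSnd_le hXh
  have h2 : traceNorm (ptraceFst ρ - σB) ≤ traceNorm (ρ - σO ⊗ₖ σB) := by
    have e : ptraceFst (ρ - σO ⊗ₖ σB) = ptraceFst ρ - σB := by
      rw [ptraceFst_sub, ptraceFst_kronecker, hσOt, one_smul]
    rw [← e]
    exact traceNorm_ptraceFst_le hXh
  have hk1 : traceNorm (σO ⊗ₖ (σB - ptraceFst ρ)) ≤ traceNorm (ρ - σO ⊗ₖ σB) :=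
    calc traceNorm (σO ⊗ₖ (σB - ptraceFst ρ))
        ≤ traceNorm (σB - ptraceFst ρ) :=
          traceNorm_kronecker_left hσOp hσOt (hσBp.1.sub hρB.1)
      _ = traceNorm (ptraceFst ρ - σB) := traceNorm_sub_comm _ _
      _ ≤ _ := h2
  have hk2 : traceNorm ((σO - ptraceSnd ρ) ⊗ₖ ptraceFst ρ) ≤ traceNorm (ρ - σO ⊗ₖ σB) :=
    calc traceNorm ((σO - ptraceSnd ρ) ⊗ₖ ptraceFst ρ)
        ≤ traceNorm (σO - ptraceSnd ρ) :=
          traceNorm_kronecker_right hρB hρBt (hσOp.1.sub hρO.1)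
      _ = traceNorm (ptraceSnd ρ - σO) := traceNorm_sub_comm _ _
      _ ≤ _ := h1
  have hherm2 : (σO ⊗ₖ (σB - ptraceFst ρ)).IsHermitian :=
    kronecker_isHermitian hσOp.1 (hσBp.1.sub hρB.1)
  have hherm3 : ((σO - ptraceSnd ρ) ⊗ₖ ptraceFst ρ).IsHermitian :=
    kronecker_isHermitian (hσOp.1.sub hρO.1) hρB.1
  have hdecomp : ρ - ptraceSnd ρ ⊗ₖ ptraceFst ρ
      = (ρ - σO ⊗ₖ σB) +
        (σO ⊗ₖ (σB - ptraceFst ρ) + (σO - ptraceSnd ρ) ⊗ₖ ptraceFst ρ) := by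
    rw [kronecker_sub, sub_kronecker]
    abel
  calc traceNorm (ρ - ptraceSnd ρ ⊗ₖ ptraceFst ρ)
      = traceNorm ((ρ - σO ⊗ₖ σB) +
          (σO ⊗ₖ (σB - ptraceFst ρ) + (σO - ptraceSnd ρ) ⊗ₖ ptraceFst ρ)) := by
        rw [hdecomp]
    _ ≤ traceNorm (ρ - σO ⊗ₖ σB) +
          traceNorm (σO ⊗ₖ (σB - ptraceFst ρ) + (σO - ptraceSnd ρ) ⊗ₖ ptraceFst ρ) :=
        traceNorm_add_le hXh (hherm2.add hherm3)
    _ ≤ traceNorm (ρ - σO ⊗ₖ σB) +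
          (traceNorm (σO ⊗ₖ (σB - ptraceFst ρ)) +
            traceNorm ((σO - ptraceSnd ρ) ⊗ₖ ptraceFst ρ)) :=
        add_le_add_right (traceNorm_add_le hherm2 hherm3) _
    _ ≤ traceNorm (ρ - σO ⊗ₖ σB) +
          (traceNorm (ρ - σO ⊗ₖ σB) + traceNorm (ρ - σO ⊗ₖ σB)) :=
        add_le_add_right (add_le_add hk1 hk2) _
    _ = 3 * traceNorm (ρ - σO ⊗ₖ σB) := by ring
end

section
/- Let V' be a unitary on ℂ^{d_A} ⊗ ℂ^{d_B}, V a unitary on ℂ^{d_B}, and θ ∈ (0, π/2). Let e₀ ∈ ℂ^{d_A} be a fixed unit vector and Π₀ = e₀e₀ᴴ. Suppose that for every ψ ∈ ℂ^{d_B}: (Π₀ ⊗ I) V'(e₀ ⊗ ψ) = sin(θ)·(e₀ ⊗ Vψ), i.e., V'(e₀ ⊗ ψ) = sin(θ)(e₀ ⊗ Vψ) + Φ^⊥(ψ) where Φ^⊥(ψ) := V'(e₀ ⊗ ψ) − sin(θ)(e₀ ⊗ Vψ) satisfies (Π₀ ⊗ I)Φ^⊥(ψ) = 0. Define R = 2Π₀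 ⊗ I − I and S = −V' R V'ᴴ R. Then for every natural number ℓ and every ψ ∈ ℂ^{d_B}: Sᵉ V'(e₀ ⊗ ψ) = sin((2ℓ+1)θ)·(e₀ ⊗ Vψ) + (cos((2ℓ+1)θ)/cos(θ))·Φ^⊥(ψ), where Sᵉ denotes the ℓ-th power of S. -/
open Matrix
open scoped Kronecker

/-- Action of `(e₀e₀ᴴ) ⊗ M` on an arbitrary vector. -/
lemma kron_vecMulVec_mulVec {dA dB : ℕ} (e₀ : Fin dA → ℂ)
    (M : Matrix (Fin dB) (Fin dB) ℂ) (v : Fin dA × Fin dB → ℂ) :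
    ((Matrix.vecMulVec e₀ (star e₀)) ⊗ₖ M) *ᵥ v
      = fun p : Fin dA × Fin dB =>
          e₀ p.1 * (M *ᵥ fun j => ∑ i, (star e₀) i * v (i, j)) p.2 := by
  funext p
  obtain ⟨i, j⟩ := p
  simp only [Matrix.mulVec, dotProduct, Matrix.kroneckerMap_apply,
    Matrix.vecMulVec_apply, Finset.mul_sum]
  rw [Fintype.sum_prod_type, Finset.sum_comm]
  exact Finset.sum_congr rfl fun j' _ => Finset.sum_congr rfl fun i' _ => by ring

/-- **Oblivious amplitude amplification** (Berry et al., Lemma 3.6).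
If a unitary `V'` implements the target unitary `V` with amplitude `sin θ` on a flagged
ancilla state `e₀`, i.e. `(Pi0 ⊗ I)V'(e₀ ⊗ ψ) = sin θ · (e₀ ⊗ Vψ)` for all `ψ`, then with
`R = 2Pi0 ⊗ I − I` and `S = −V' R V'ᴴ R`, for every `ℓ` and every `ψ`:
`Sᵉ V'(e₀ ⊗ ψ) = sin((2ℓ+1)θ)·(e₀ ⊗ Vψ) + (cos((2ℓ+1)θ)/cos θ)·Φ^⊥(ψ)`. -/
theorem oblivious_amplitude_amplification
    (dA dB : ℕ)
    (V' : Matrix (Fin dA × Fin dB) (Fin dA × Fin dB) ℂ)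
    (hV'₁ : V'ᴴ * V' = 1) (hV'₂ : V' * V'ᴴ = 1)
    (V : Matrix (Fin dB) (Fin dB) ℂ)
    (hV₁ : Vᴴ * V = 1) (hV₂ : V * Vᴴ = 1)
    (θ : ℝ) (hθ : θ ∈ Set.Ioo 0 (Real.pi / 2))
    (e₀ : Fin dA → ℂ) (he₀ : star e₀ ⬝ᵥ e₀ = 1)
    (h : ∀ ψ : Fin dB → ℂ,
      ((Matrix.vecMulVec e₀ (star e₀)) ⊗ₖ (1 : Matrix (Fin dB) (Fin dB) ℂ)) *ᵥ
          (V' *ᵥ fun p : Fin dA × Fin dB => e₀ p.1 * ψ p.2)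
        = (Real.sin θ : ℂ) • fun p : Fin dA × Fin dB => e₀ p.1 * (V *ᵥ ψ) p.2) :
    ∀ (ℓ : ℕ) (ψ : Fin dB → ℂ),
      (-(V' * ((2 : ℂ) • ((Matrix.vecMulVec e₀ (star e₀)) ⊗ₖ
            (1 : Matrix (Fin dB) (Fin dB) ℂ)) - 1) * V'ᴴ *
          ((2 : ℂ) • ((Matrix.vecMulVec e₀ (star e₀)) ⊗ₖ
            (1 : Matrix (Fin dB) (Fin dB) ℂ)) - 1))) ^ ℓ *ᵥ
        (V' *ᵥ fun p : Fin dA × Fin dB => e₀ p.1 * ψ p.2)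
      = ((Real.sin ((2 * (ℓ : ℝ) + 1) * θ) : ℂ) •
            fun p : Fin dA × Fin dB => e₀ p.1 * (V *ᵥ ψ) p.2)
        + ((Real.cos ((2 * (ℓ : ℝ) + 1) * θ) / Real.cos θ : ℝ) : ℂ) •
            ((V' *ᵥ fun p : Fin dA × Fin dB => e₀ p.1 * ψ p.2)
              - (Real.sin θ : ℂ) •
                  fun p : Fin dA × Fin dB => e₀ p.1 * (V *ᵥ ψ) p.2) := by
  intro ℓ ψ
  have hcos : Real.cos θ ≠ 0 := by
    have : 0 < Real.cos θ := Real.cos_pos_of_mem_Ioo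
      ⟨by linarith [hθ.1, Real.pi_pos], hθ.2⟩
    exact ne_of_gt this
  -- notation
  set Pi0 : Matrix (Fin dA) (Fin dA) ℂ := Matrix.vecMulVec e₀ (star e₀) with hPi0
  set P : Matrix (Fin dA × Fin dB) (Fin dA × Fin dB) ℂ :=
    Pi0 ⊗ₖ (1 : Matrix (Fin dB) (Fin dB) ℂ) with hPdef
  set Rm : Matrix (Fin dA × Fin dB) (Fin dA × Fin dB) ℂ := (2 : ℂ) • P - 1 with hRmdef
  set S : Matrix (Fin dA × Fin dB) (Fin dA × Fin dB) ℂ :=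
    -(V' * Rm * V'ᴴ * Rm) with hSdef
  set x : Fin dA × Fin dB → ℂ := fun p => e₀ p.1 * ψ p.2 with hxdef
  set a : Fin dA × Fin dB → ℂ := fun p => e₀ p.1 * (V *ᵥ ψ) p.2 with hadef
  set w : Fin dA × Fin dB → ℂ := V' *ᵥ x with hwdef
  set b : Fin dA × Fin dB → ℂ := w - (Real.sin θ : ℂ) • a with hbdef
  set c : Fin dA × Fin dB → ℂ := V'ᴴ *ᵥ a - (Real.sin θ : ℂ) • x with hcdef
  have he₀' : (∑ i, (star e₀) i * e₀ i) = 1 := he₀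
  -- product-form vectors
  have hform : ∀ (M : Matrix (Fin dB) (Fin dB) ℂ) (χ : Fin dB → ℂ),
      (Pi0 ⊗ₖ M) *ᵥ (fun p : Fin dA × Fin dB => e₀ p.1 * χ p.2)
        = fun p => e₀ p.1 * (M *ᵥ χ) p.2 := by
    intro M χ
    rw [hPi0, kron_vecMulVec_mulVec]
    have : (fun j => ∑ i, (star e₀) i * (e₀ i * χ j)) = χ := by
      funext j
      have : ∑ i, (star e₀) i * (e₀ i * χ j) = (∑ i, (star e₀) i * e₀ i) * χ j := by
        rw [Finset.sum_mul]; exact Finset.sum_congr rfl fun i _ => by ring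
      rw [this, he₀', one_mul]
    rw [this]
  have hPx : P *ᵥ x = x := by
    rw [hPdef, hxdef, hform, Matrix.one_mulVec]
  have hPa : P *ᵥ a = a := by
    rw [hPdef, hadef, hform, Matrix.one_mulVec]
  have hPw : P *ᵥ w = (Real.sin θ : ℂ) • a := h ψ
  -- conjTranspose facts
  have hPH : Pᴴ = P := by
    ext ⟨i, j⟩ ⟨i', j'⟩
    simp only [Matrix.conjTranspose_apply, hPdef, Matrix.kroneckerMap_apply, hPi0,
      Matrix.vecMulVec_apply, star_mul', Pi.star_apply, star_star, Matrix.one_apply]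
    by_cases hjj : j' = j <;> by_cases hjj' : j = j' <;>
      simp_all <;> ring
  -- the key matrix identity P V' P = sin θ • (Pi0 ⊗ V)
  have hPVP : P * V' * P = (Real.sin θ : ℂ) • (Pi0 ⊗ₖ V) := by
    have key : ∀ v : Fin dA × Fin dB → ℂ,
        (P * V' * P) *ᵥ v = ((Real.sin θ : ℂ) • (Pi0 ⊗ₖ V)) *ᵥ v := by
      intro v
      set χ : Fin dB → ℂ := fun j => ∑ i, (star e₀) i * v (i, j) with hχ
      have hPv : P *ᵥ v = fun p => e₀ p.1 * χ p.2 := by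
        rw [hPdef, hPi0, kron_vecMulVec_mulVec]
        funext p
        rw [Matrix.one_mulVec]
      rw [← Matrix.mulVec_mulVec, ← Matrix.mulVec_mulVec, hPv, h χ,
        Matrix.smul_mulVec, hPi0, kron_vecMulVec_mulVec]
    ext i j
    have := congrFun (key (Pi.single j 1)) i
    simpa [Matrix.mulVec_single] using this
  have hPVHP : P * V'ᴴ * P = (Real.sin θ : ℂ) • (Pi0 ⊗ₖ Vᴴ) := by
    have := congrArg Matrix.conjTranspose hPVP
    rw [Matrix.conjTranspose_mul, Matrix.conjTranspose_mul, hPH,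
      Matrix.conjTranspose_smul] at this
    rw [Matrix.mul_assoc, this]
    have hstar : star ((Real.sin θ : ℝ) : ℂ) = ((Real.sin θ : ℝ) : ℂ) := by
      rw [Complex.star_def, Complex.conj_ofReal]
    rw [hstar]
    congr 1
    ext pq pq'
    obtain ⟨i, j⟩ := pq
    obtain ⟨i', j'⟩ := pq'
    simp only [Matrix.conjTranspose_apply, Matrix.kroneckerMap_apply, hPi0,
      Matrix.vecMulVec_apply, star_mul', Pi.star_apply, star_star]
    ring
  -- P annihilates b and c
  have hPb : P *ᵥ b = 0 := by
    rw [hbdef, Matrix.mulVec_sub, Matrix.mulVec_smul, hPw, hPa, sub_self]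
  have hPc : P *ᵥ c = 0 := by
    have h1 : P *ᵥ (V'ᴴ *ᵥ a) = (Real.sin θ : ℂ) • x := by
      calc P *ᵥ (V'ᴴ *ᵥ a) = P *ᵥ (V'ᴴ *ᵥ (P *ᵥ a)) := by rw [hPa]
        _ = (P * V'ᴴ * P) *ᵥ a := by
            rw [Matrix.mulVec_mulVec, Matrix.mulVec_mulVec, Matrix.mul_assoc]
        _ = ((Real.sin θ : ℂ) • (Pi0 ⊗ₖ Vᴴ)) *ᵥ a := by rw [hPVHP]
        _ = (Real.sin θ : ℂ) • ((Pi0 ⊗ₖ Vᴴ) *ᵥ a) := Matrix.smul_mulVec _ _ _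
        _ = (Real.sin θ : ℂ) • x := by
            rw [hadef, hform, hxdef]
            congr 1
            funext p
            rw [Matrix.mulVec_mulVec, hV₁, Matrix.one_mulVec]
    rw [hcdef, Matrix.mulVec_sub, Matrix.mulVec_smul, h1, hPx, sub_self]
  -- R action
  have hR : ∀ v : Fin dA × Fin dB → ℂ, Rm *ᵥ v = (2 : ℂ) • (P *ᵥ v) - v := by
    intro v
    rw [hRmdef, Matrix.sub_mulVec, Matrix.smul_mulVec, Matrix.one_mulVec]
  have hRa : Rm *ᵥ a = a := by rw [hR, hPa]; module
  have hRx : Rm *ᵥ x = x := by rw [hR, hPx]; module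
  have hRb : Rm *ᵥ b = -b := by rw [hR, hPb]; module
  have hRc : Rm *ᵥ c = -c := by rw [hR, hPc]; module
  -- V' and V'ᴴ relations
  have hVHa : V'ᴴ *ᵥ a = (Real.sin θ : ℂ) • x + c := by rw [hcdef]; module
  have hVc : V' *ᵥ c = a - (Real.sin θ : ℂ) • w := by
    rw [hcdef, Matrix.mulVec_sub, Matrix.mulVec_smul, Matrix.mulVec_mulVec, hV'₂,
      Matrix.one_mulVec, hwdef]
  have hVHw : V'ᴴ *ᵥ w = x := by
    rw [hwdef, Matrix.mulVec_mulVec, hV'₁, Matrix.one_mulVec]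
  have hVHb : V'ᴴ *ᵥ b = (1 - (Real.sin θ : ℂ)^2) • x - (Real.sin θ : ℂ) • c := by
    rw [hbdef, Matrix.mulVec_sub, Matrix.mulVec_smul, hVHw, hVHa]
    module
  -- unfolding S *ᵥ v
  have hSv : ∀ v : Fin dA × Fin dB → ℂ,
      S *ᵥ v = -(V' *ᵥ (Rm *ᵥ (V'ᴴ *ᵥ (Rm *ᵥ v)))) := by
    intro v
    rw [hSdef, Matrix.neg_mulVec, Matrix.mulVec_mulVec, Matrix.mulVec_mulVec,
      Matrix.mulVec_mulVec, Matrix.mul_assoc, Matrix.mul_assoc]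
  -- action of S on a and b
  have hSa : S *ᵥ a = a - ((2 : ℂ) * (Real.sin θ : ℂ)) • w := by
    rw [hSv, hRa, hVHa, Matrix.mulVec_add, Matrix.mulVec_smul, hRx, hRc,
      Matrix.mulVec_add, Matrix.mulVec_smul, Matrix.mulVec_neg, hVc]
    rw [← hwdef]
    module
  have hSb : S *ᵥ b = (Real.sin θ : ℂ) • a
      + ((1 : ℂ) - 2 * (Real.sin θ : ℂ)^2) • w := by
    rw [hSv, hRb, Matrix.mulVec_neg, hVHb, neg_sub,
      Matrix.mulVec_sub, Matrix.mulVec_smul, Matrix.mulVec_smul, hRc, hRx,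
      Matrix.mulVec_sub, Matrix.mulVec_smul, Matrix.mulVec_smul, Matrix.mulVec_neg,
      hVc]
    rw [← hwdef]
    module
  -- Pythagorean identity over ℂ
  have hpy : ((Real.sin θ : ℝ) : ℂ) ^ 2 + ((Real.cos θ : ℝ) : ℂ) ^ 2 = 1 := by
    rw [← Complex.ofReal_pow, ← Complex.ofReal_pow, ← Complex.ofReal_add,
      Real.sin_sq_add_cos_sq, Complex.ofReal_one]
  have hc2 : ((Real.cos (2 * θ) : ℝ) : ℂ) = 1 - 2 * ((Real.sin θ : ℝ) : ℂ) ^ 2 := by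
    rw [Real.cos_two_mul', Complex.ofReal_sub, Complex.ofReal_pow, Complex.ofReal_pow]
    linear_combination hpy
  have h2s : ((2 * Real.sin θ : ℝ) : ℂ) = 2 * ((Real.sin θ : ℝ) : ℂ) := by
    rw [Complex.ofReal_mul, Complex.ofReal_ofNat]
  have h3 : ((2 * Real.sin θ * Real.cos θ ^ 2 : ℝ) : ℂ)
      = 2 * ((Real.sin θ : ℝ) : ℂ) * (1 - ((Real.sin θ : ℝ) : ℂ) ^ 2) := by
    rw [Complex.ofReal_mul, Complex.ofReal_mul, Complex.ofReal_pow,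
      Complex.ofReal_ofNat]
    linear_combination (2 * ((Real.sin θ : ℝ) : ℂ)) * hpy
  -- coefficient identities in {a, b}
  have hSa' : S *ᵥ a = ((Real.cos (2 * θ) : ℝ) : ℂ) • a
      - ((2 * Real.sin θ : ℝ) : ℂ) • b := by
    rw [hSa, hbdef, hc2, h2s]
    match_scalars <;> ring
  have hSb' : S *ᵥ b = ((2 * Real.sin θ * Real.cos θ ^ 2 : ℝ) : ℂ) • a
      + ((Real.cos (2 * θ) : ℝ) : ℂ) • b := by
    rw [hSb, hbdef, hc2, h3]
    match_scalars <;> ring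
  -- main induction
  induction ℓ with
  | zero =>
      rw [pow_zero, Matrix.one_mulVec]
      rw [show (2 * ((0 : ℕ) : ℝ) + 1) * θ = θ by push_cast; ring]
      rw [div_self hcos, Complex.ofReal_one, one_smul, hbdef]
      module
  | succ n ih =>
      rw [pow_succ', ← Matrix.mulVec_mulVec, ih, Matrix.mulVec_add,
        Matrix.mulVec_smul, Matrix.mulVec_smul, hSa', hSb']
      set m : ℝ := (2 * (n : ℝ) + 1) * θ with hm
      have hM' : (2 * (((n : ℕ) + 1 : ℕ) : ℝ) + 1) * θ = m + 2 * θ := by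
        rw [hm]; push_cast; ring
      have hA : Real.sin (m + 2 * θ)
          = Real.sin m * Real.cos (2 * θ)
            + (Real.cos m / Real.cos θ) * (2 * Real.sin θ * Real.cos θ ^ 2) := by
        rw [Real.sin_add, Real.sin_two_mul]
        field_simp
      have hB : Real.cos (m + 2 * θ) / Real.cos θ
          = Real.sin m * (-(2 * Real.sin θ))
            + (Real.cos m / Real.cos θ) * Real.cos (2 * θ) := by
        rw [Real.cos_add, Real.sin_two_mul]
        field_simp
        ring
      rw [hM', hA, hB]
      simp only [Complex.ofReal_add, Complex.ofReal_mul, Complex.ofReal_neg,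
        Complex.ofReal_div]
      match_scalars <;> ring
end

section
/- Let ψ₀, ψ₁ ∈ ℂ^M be orthonormal vectors, let e₀, e₁ be the standard basis of ℂ², and set Ψ = (e₀ ⊗ ψ₀ + e₁ ⊗ ψ₁)/√2 ∈ ℂ² ⊗ ℂ^M. Let Z = diag(1, −1) on ℂ², let M be a Hermitian M×M matrix, and define c = ⟨Ψ, (Z ⊗ M)Ψ⟩ − ⟨Ψ, (Z ⊗ I)Ψ⟩·⟨Ψ, (I ⊗ M)Ψ⟩. Then for every Hermitian matrix X on ℂ^M satisfying X ψ₀ = ψ₁ and X ψ₁ = ψ₀: ⟨ψ₁, (X M − M X) ψ₀⟩ = 2c. -/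
open Matrix
open scoped Kronecker

/-- The state `Ψ = (e₀ ⊗ ψ₀ + e₁ ⊗ ψ₁)/√2 ∈ ℂ² ⊗ ℂ^M`. -/
noncomputable def PsiVec (M : ℕ) (ψ₀ ψ₁ : Fin M → ℂ) : Fin 2 × Fin M → ℂ :=
  fun p => (if p.1 = 0 then ψ₀ p.2 else ψ₁ p.2) / (Real.sqrt 2 : ℂ)

/-- The Pauli-`Z` matrix `diag(1, −1)`. -/
noncomputable def Zmat : Matrix (Fin 2) (Fin 2) ℂ := !![1, 0; 0, -1]

lemma kron_dot (M : ℕ) (ψ₀ ψ₁ : Fin M → ℂ) (A : Matrix (Fin 2) (Fin 2) ℂ)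
    (B : Matrix (Fin M) (Fin M) ℂ) :
    star (PsiVec M ψ₀ ψ₁) ⬝ᵥ ((A ⊗ₖ B) *ᵥ PsiVec M ψ₀ ψ₁)
    = (A 0 0 * (star ψ₀ ⬝ᵥ (B *ᵥ ψ₀)) + A 0 1 * (star ψ₀ ⬝ᵥ (B *ᵥ ψ₁))
      + A 1 0 * (star ψ₁ ⬝ᵥ (B *ᵥ ψ₀)) + A 1 1 * (star ψ₁ ⬝ᵥ (B *ᵥ ψ₁))) / 2 := by
  set s : ℂ := ((Real.sqrt 2 : ℝ) : ℂ) with hsdef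
  have hs : s * s = 2 := by
    rw [hsdef]; norm_cast; exact Real.mul_self_sqrt (by norm_num)
  set v : Fin 2 × Fin M → ℂ := fun p => if p.1 = 0 then ψ₀ p.2 else ψ₁ p.2 with hv
  have hΨ : PsiVec M ψ₀ ψ₁ = s⁻¹ • v := by
    funext p; simp [PsiVec, hv, div_eq_inv_mul, hsdef]
  have hstars : star s = s := by rw [hsdef]; exact Complex.conj_ofReal _
  have key : star v ⬝ᵥ ((A ⊗ₖ B) *ᵥ v)
      = A 0 0 * (star ψ₀ ⬝ᵥ (B *ᵥ ψ₀)) + A 0 1 * (star ψ₀ ⬝ᵥ (B *ᵥ ψ₁))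
      + A 1 0 * (star ψ₁ ⬝ᵥ (B *ᵥ ψ₀)) + A 1 1 * (star ψ₁ ⬝ᵥ (B *ᵥ ψ₁)) := by
    simp only [dotProduct, mulVec, kroneckerMap_apply, Fintype.sum_prod_type,
      Fin.sum_univ_two, Pi.star_apply, hv]
    simp only [Fin.isValue, reduceIte, one_ne_zero, Finset.mul_sum, Finset.sum_add_distrib,
      mul_add, Fin.one_eq_zero_iff, OfNat.ofNat_ne_one]
    simp only [show ∀ a b c d : ℂ, a*(b*c*d) = b*(a*(c*d)) from fun a b c d => by ring]
    ring
  rw [hΨ, star_smul, smul_dotProduct, mulVec_smul, dotProduct_smul, key]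
  rw [star_inv₀, hstars, smul_smul, smul_eq_mul]
  rw [← mul_inv, hs]
  ring

/-- **A nonzero connected correlator obstructs commuting logical operators.**
With `Ψ = (e₀ ⊗ ψ₀ + e₁ ⊗ ψ₁)/√2` and `c` the connected correlation between `Z` on the
qubit and a Hermitian observable `M` on the second factor, every Hermitian `X` acting as
logical Pauli-`X` on `span{ψ₀, ψ₁}` satisfies `⟨ψ₁, (XM − MX)ψ₀⟩ = 2c`. -/
theorem nonzero_correlator_obstructs_ghosts
    (M : ℕ) (ψ₀ ψ₁ : Fin M → ℂ)
    (h00 : star ψ₀ ⬝ᵥ ψ₀ = 1) (h11 : star ψ₁ ⬝ᵥ ψ₁ = 1) (h01 : star ψ₀ ⬝ᵥ ψ₁ = 0)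
    (Mm : Matrix (Fin M) (Fin M) ℂ) (hMm : Mm.IsHermitian)
    (c : ℂ)
    (hc : c = star (PsiVec M ψ₀ ψ₁) ⬝ᵥ ((Zmat ⊗ₖ Mm) *ᵥ PsiVec M ψ₀ ψ₁)
        - (star (PsiVec M ψ₀ ψ₁) ⬝ᵥ
            ((Zmat ⊗ₖ (1 : Matrix (Fin M) (Fin M) ℂ)) *ᵥ PsiVec M ψ₀ ψ₁))
          * (star (PsiVec M ψ₀ ψ₁) ⬝ᵥ
            (((1 : Matrix (Fin 2) (Fin 2) ℂ) ⊗ₖ Mm) *ᵥ PsiVec M ψ₀ ψ₁))) :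
    ∀ X : Matrix (Fin M) (Fin M) ℂ, X.IsHermitian →
      X *ᵥ ψ₀ = ψ₁ → X *ᵥ ψ₁ = ψ₀ →
      star ψ₁ ⬝ᵥ ((X * Mm - Mm * X) *ᵥ ψ₀) = 2 * c := by
  intro X hX hX0 hX1
  have hZ00 : Zmat 0 0 = 1 := by simp [Zmat]
  have hZ01 : Zmat 0 1 = 0 := by simp [Zmat]
  have hZ10 : Zmat 1 0 = 0 := by simp [Zmat]
  have hZ11 : Zmat 1 1 = -1 := by simp [Zmat]
  have hc' : c = (star ψ₀ ⬝ᵥ (Mm *ᵥ ψ₀) - star ψ₁ ⬝ᵥ (Mm *ᵥ ψ₁)) / 2 := by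
    rw [hc, kron_dot, kron_dot, kron_dot]
    simp only [hZ00, hZ01, hZ10, hZ11, Matrix.one_apply_eq, one_mulVec,
      Matrix.one_apply_ne (show (0 : Fin 2) ≠ 1 by decide),
      Matrix.one_apply_ne (show (1 : Fin 2) ≠ 0 by decide), h00, h11, h01]
    ring
  have hvX : star ψ₁ ᵥ* X = star ψ₀ := by
    have h := star_mulVec (M := Xᴴ) (v := ψ₁)
    rw [conjTranspose_conjTranspose] at h
    rw [← h, hX.eq, hX1]
  have e1 : star ψ₁ ⬝ᵥ ((X * Mm) *ᵥ ψ₀) = star ψ₀ ⬝ᵥ (Mm *ᵥ ψ₀) := by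
    rw [← mulVec_mulVec, dotProduct_mulVec, hvX]
  have e2 : star ψ₁ ⬝ᵥ ((Mm * X) *ᵥ ψ₀) = star ψ₁ ⬝ᵥ (Mm *ᵥ ψ₁) := by
    rw [← mulVec_mulVec, hX0]
  rw [sub_mulVec, dotProduct_sub, e1, e2, hc']
  ring
end
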